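/- Suppose u : ℝ → ℝ is locally absolutely continuous with derivative u_x, F : ℝ → ℝ is nondecreasing with 0 ≤ F(x) ≤ F_∞ for all x ∈ ℝ, and ∫_a^b u_x(z)² dz ≤ F(b) − F(a) for all a ≤ b. Let u_p = P_{Δx}u be the piecewise linear projection of u on the grid of mesh Δx > 0. Then u − u_p ∈ L²(ℝ) and ‖u − u_p‖_{L²(ℝ)} ≤ √F_∞ · Δx. -/

import Mathlib

open MeasureTheory intervalIntegral

/-- Piecewise linear projection on the grid of mesh `dx`: the unique function equal to
`f (j * dx)` at every grid point `j * dx` (`j ∈ ℤ`) and affine on each cell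
`[j * dx, (j+1) * dx]`. -/
noncomputable def plProj (dx : ℝ) (f : ℝ → ℝ) : ℝ → ℝ := fun x =>
  f ((⌊x / dx⌋ : ℝ) * dx) +
    ((x - (⌊x / dx⌋ : ℝ) * dx) / dx) *
      (f (((⌊x / dx⌋ : ℝ) + 1) * dx) - f ((⌊x / dx⌋ : ℝ) * dx))

/-- Cauchy–Schwarz for interval integrals. -/
lemma cs_int_aux (ux : ℝ → ℝ)
    (hux_int : ∀ a b : ℝ, IntervalIntegrable ux volume a b)
    (hux2_int : ∀ a b : ℝ, IntervalIntegrable (fun z => ux z ^ 2) volume a b)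
    (a x : ℝ) (hax : a ≤ x) :
    (∫ z in a..x, ux z) ^ 2 ≤ (x - a) * ∫ z in a..x, ux z ^ 2 := by
  rcases eq_or_lt_of_le hax with rfl | hlt
  · simp
  set L := x - a with hL
  have hLpos : 0 < L := by simp [hL]; linarith
  set I := ∫ z in a..x, ux z with hI
  set J := ∫ z in a..x, ux z ^ 2 with hJ
  set c := I / L with hc
  have key : 0 ≤ J - 2 * c * I + L * c ^ 2 := by
    have h0 : 0 ≤ ∫ z in a..x, (ux z - c) ^ 2 :=
      intervalIntegral.integral_nonneg hax (fun z _ => sq_nonneg _)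
    have hexp : (∫ z in a..x, (ux z - c) ^ 2)
        = J - 2 * c * I + L * c ^ 2 := by
      have h1 : IntervalIntegrable (fun z => 2 * c * ux z) volume a x :=
        (hux_int a x).const_mul _
      have h2 := hux2_int a x
      have heq : ∀ z, (ux z - c) ^ 2 = ux z ^ 2 - 2 * c * ux z + c ^ 2 := by
        intro z; ring
      simp only [heq]
      rw [intervalIntegral.integral_add (h2.sub h1) intervalIntegrable_const,
        intervalIntegral.integral_sub h2 h1,
        intervalIntegral.integral_const_mul, intervalIntegral.integral_const]
      simp [hI, hJ, hL, smul_eq_mul]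
      try ring
    linarith [hexp ▸ h0]
  have hmul : L * (J - 2 * c * I + L * c ^ 2) = L * J - I ^ 2 := by
    rw [hc]
    field_simp
    ring
  nlinarith [mul_nonneg hLpos.le key]

/-- Pointwise bound on each cell. -/
lemma ptwise_aux (u ux F : ℝ → ℝ)
    (hux_int : ∀ a b : ℝ, IntervalIntegrable ux volume a b)
    (hux2_int : ∀ a b : ℝ, IntervalIntegrable (fun z => ux z ^ 2) volume a b)
    (hFTC : ∀ a b : ℝ, a ≤ b → u b - u a = ∫ z in a..b, ux z)
    (hE : ∀ a b : ℝ, a ≤ b → (∫ z in a..b, ux z ^ 2) ≤ F b - F a)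
    (dx : ℝ) (hdx : 0 < dx) (x : ℝ) :
    (u x - plProj dx u x) ^ 2 ≤
      dx * (F (((⌊x / dx⌋ : ℝ) + 1) * dx) - F ((⌊x / dx⌋ : ℝ) * dx)) := by
  set j : ℝ := (⌊x / dx⌋ : ℝ) with hj
  set a := j * dx with ha
  set b := (j + 1) * dx with hb
  have hax : a ≤ x := by
    have h1 : j ≤ x / dx := Int.floor_le _
    calc a = j * dx := rfl
    _ ≤ (x / dx) * dx := by nlinarith
    _ = x := by field_simp
  have hxb : x ≤ b := by
    have h1 : x / dx < j + 1 := Int.lt_floor_add_one _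
    calc x = (x / dx) * dx := by field_simp
    _ ≤ (j + 1) * dx := by nlinarith
  have hab : a ≤ b := le_trans hax hxb
  set θ := (x - a) / dx with hθ
  have hθ0 : 0 ≤ θ := div_nonneg (by linarith) hdx.le
  have hθ1 : θ ≤ 1 := by
    rw [hθ, div_le_one hdx]
    have : b - a = dx := by rw [hb, ha]; ring
    linarith
  set P := u x - u a with hP
  set Q := u b - u x with hQ
  set J1 := ∫ z in a..x, ux z ^ 2 with hJ1
  set J2 := ∫ z in x..b, ux z ^ 2 with hJ2
  have hJ1n : 0 ≤ J1 := intervalIntegral.integral_nonneg hax (fun z _ => sq_nonneg _)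
  have hJ2n : 0 ≤ J2 := intervalIntegral.integral_nonneg hxb (fun z _ => sq_nonneg _)
  have hxa : x - a = θ * dx := by rw [hθ, div_mul_cancel₀ _ hdx.ne']
  have hbx : b - x = (1 - θ) * dx := by
    have hba : b - a = dx := by rw [hb, ha]; ring
    rw [hθ, sub_mul, div_mul_cancel₀ _ hdx.ne']
    linarith
  have hP2 : P ^ 2 ≤ θ * dx * J1 := by
    rw [hP, hFTC a x hax]
    calc (∫ z in a..x, ux z) ^ 2 ≤ (x - a) * J1 := cs_int_aux ux hux_int hux2_int a x hax
    _ = θ * dx * J1 := by rw [hxa]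
  have hQ2 : Q ^ 2 ≤ (1 - θ) * dx * J2 := by
    rw [hQ, hFTC x b hxb]
    calc (∫ z in x..b, ux z) ^ 2 ≤ (b - x) * J2 := cs_int_aux ux hux_int hux2_int x b hxb
    _ = (1 - θ) * dx * J2 := by rw [hbx]
  have hsum : J1 + J2 ≤ F b - F a := by
    have := intervalIntegral.integral_add_adjacent_intervals (hux2_int a x) (hux2_int x b)
    rw [hJ1, hJ2, this]
    exact hE a b hab
  have he : u x - plProj dx u x = P - θ * (P + Q) := by
    show u x - (u a + θ * (u b - u a)) = P - θ * (P + Q)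
    rw [hP, hQ]; ring
  rw [he]
  have h5 : θ * (1 - θ) ≤ 1 := by nlinarith
  nlinarith [mul_nonneg (mul_nonneg hθ0 (by linarith : (0:ℝ) ≤ 1 - θ)) (sq_nonneg (P + Q)),
    mul_le_mul_of_nonneg_left hP2 (by linarith : (0:ℝ) ≤ 1 - θ),
    mul_le_mul_of_nonneg_left hQ2 hθ0,
    mul_le_mul_of_nonneg_right h5 (mul_nonneg hdx.le hJ1n),
    mul_le_mul_of_nonneg_right h5 (mul_nonneg hdx.le hJ2n),
    mul_le_mul_of_nonneg_left hsum hdx.le]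

lemma Icc_int_succ_aux (a b : ℤ) (hab : a ≤ b + 1) :
    Finset.Icc a (b + 1) = insert (b + 1) (Finset.Icc a b) := by
  ext k; simp [Finset.mem_Icc, Finset.mem_insert]; omega

lemma tele_aux (F : ℝ → ℝ) (dx : ℝ) (a b : ℤ) (hab : a ≤ b) :
    ∑ j ∈ Finset.Icc a b, (F (((j : ℝ) + 1) * dx) - F ((j : ℝ) * dx))
      = F (((b : ℝ) + 1) * dx) - F ((a : ℝ) * dx) := by
  refine Int.le_induction (m := a)
    (motive := fun b _ => ∑ j ∈ Finset.Icc a b, (F (((j : ℝ) + 1) * dx) - F ((j : ℝ) * dx))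
      = F (((b : ℝ) + 1) * dx) - F ((a : ℝ) * dx)) (by simp) ?_ b hab
  intro b hb ih
  rw [Icc_int_succ_aux a b (by omega), Finset.sum_insert (by simp), ih]
  push_cast
  ring

lemma tsum_bound_aux (F : ℝ → ℝ) (Finf : ℝ) (hFmono : Monotone F)
    (hF0 : ∀ x, 0 ≤ F x) (hFle : ∀ x, F x ≤ Finf) (dx : ℝ) (hdx : 0 < dx) :
    ∑' j : ℤ, ENNReal.ofReal (F (((j : ℝ) + 1) * dx) - F ((j : ℝ) * dx))
      ≤ ENNReal.ofReal Finf := by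
  rw [ENNReal.tsum_eq_iSup_sum]
  refine iSup_le fun s => ?_
  rcases s.eq_empty_or_nonempty with rfl | hs
  · simp
  set a := s.min' hs
  set b := s.max' hs
  have hab : a ≤ b := s.min'_le _ (s.max'_mem hs)
  have hsub : s ⊆ Finset.Icc a b := fun k hk =>
    Finset.mem_Icc.2 ⟨s.min'_le k hk, s.le_max' k hk⟩
  refine (Finset.sum_le_sum_of_subset hsub).trans ?_
  have hnn : ∀ j ∈ Finset.Icc a b, 0 ≤ F (((j : ℝ) + 1) * dx) - F ((j : ℝ) * dx) := by
    intro j _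
    have h : (j : ℝ) * dx ≤ ((j : ℝ) + 1) * dx := by nlinarith
    linarith [hFmono h]
  rw [← ENNReal.ofReal_sum_of_nonneg hnn, tele_aux F dx a b hab]
  apply ENNReal.ofReal_le_ofReal
  linarith [hF0 ((a : ℝ) * dx), hFle (((b : ℝ) + 1) * dx)]

/-- Second projection estimate: `u - P_{Δx} u ∈ L²(ℝ)` and `‖u - P_{Δx} u‖_2 ≤ √F_∞ Δx`. -/
theorem projection_estimate_u_L2
    (u ux F : ℝ → ℝ) (Finf : ℝ) (hFinf : 0 < Finf)
    (hFmono : Monotone F)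
    (hF0 : ∀ x, 0 ≤ F x) (hFle : ∀ x, F x ≤ Finf)
    (hux_int : ∀ a b : ℝ, IntervalIntegrable ux volume a b)
    (hux2_int : ∀ a b : ℝ, IntervalIntegrable (fun z => ux z ^ 2) volume a b)
    (hFTC : ∀ a b : ℝ, a ≤ b → u b - u a = ∫ z in a..b, ux z)
    (hE : ∀ a b : ℝ, a ≤ b → (∫ z in a..b, ux z ^ 2) ≤ F b - F a)
    (dx : ℝ) (hdx : 0 < dx) :
    MemLp (fun x => u x - plProj dx u x) 2 volume ∧
      eLpNorm (fun x => u x - plProj dx u x) 2 volume ≤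
        ENNReal.ofReal (Real.sqrt Finf * dx) := by
  -- continuity of u
  have hu_eq : ∀ x, u x = u 0 + ∫ t in (0:ℝ)..x, ux t := by
    intro x
    rcases le_total 0 x with h | h
    · have := hFTC 0 x h; linarith
    · have h1 := hFTC x 0 h
      have h2 : (∫ t in x..(0:ℝ), ux t) = -∫ t in (0:ℝ)..x, ux t :=
        intervalIntegral.integral_symm 0 x
      rw [h2] at h1
      linarith
  have hu_cont : Continuous u := by
    have : u = fun x => u 0 + ∫ t in (0:ℝ)..x, ux t := funext hu_eq
    rw [this]
    exact continuous_const.add (intervalIntegral.continuous_primitive hux_int 0)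
  -- measurability
  have hfl : Measurable fun x : ℝ => ((⌊x / dx⌋ : ℤ) : ℝ) :=
    (measurable_of_countable (Int.cast : ℤ → ℝ)).comp
      (Int.measurable_floor.comp (measurable_id.div_const dx))
  have hu : Measurable u := hu_cont.measurable
  have hmeas : Measurable fun x => u x - plProj dx u x := by
    unfold plProj
    exact hu.sub ((hu.comp (hfl.mul_const dx)).add
      (((measurable_id.sub (hfl.mul_const dx)).div_const dx).mul
        ((hu.comp ((hfl.add_const 1).mul_const dx)).sub (hu.comp (hfl.mul_const dx)))))
  set e := fun x => u x - plProj dx u x with he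
  -- cells
  set cell : ℤ → Set ℝ := fun j => Set.Ico ((j : ℝ) * dx) (((j : ℝ) + 1) * dx) with hcell_def
  have hfloor : ∀ (j : ℤ) (x : ℝ), x ∈ cell j → ⌊x / dx⌋ = j := by
    intro j x hx
    obtain ⟨h1, h2⟩ := hx
    rw [Int.floor_eq_iff]
    constructor
    · rw [le_div_iff₀ hdx]; exact h1
    · rw [div_lt_iff₀ hdx]; exact h2
  have hUnion : (⋃ j : ℤ, cell j) = Set.univ := by
    ext x
    simp only [Set.mem_iUnion, Set.mem_univ, iff_true]
    refine ⟨⌊x / dx⌋, ?_, ?_⟩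
    · calc ((⌊x / dx⌋ : ℝ)) * dx ≤ (x / dx) * dx := by
            have := Int.floor_le (x / dx); nlinarith
      _ = x := by field_simp
    · calc x = (x / dx) * dx := by field_simp
      _ < ((⌊x / dx⌋ : ℝ) + 1) * dx := by
            have := Int.lt_floor_add_one (x / dx); nlinarith
  have hdisj : Pairwise (Function.onFun Disjoint cell) := by
    intro i k hik
    rw [Function.onFun, Set.disjoint_left]
    intro x hxi hxk
    exact hik ((hfloor i x hxi).symm.trans (hfloor k x hxk))
  -- cell-wise integral bound
  have hcell_bound : ∀ j : ℤ, (∫⁻ x in cell j, ENNReal.ofReal (e x ^ 2))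
      ≤ ENNReal.ofReal (dx ^ 2) *
        ENNReal.ofReal (F (((j : ℝ) + 1) * dx) - F ((j : ℝ) * dx)) := by
    intro j
    have hF0j : 0 ≤ F (((j : ℝ) + 1) * dx) - F ((j : ℝ) * dx) := by
      have h : (j : ℝ) * dx ≤ ((j : ℝ) + 1) * dx := by nlinarith
      linarith [hFmono h]
    have hbd : ∀ x ∈ cell j, ENNReal.ofReal (e x ^ 2)
        ≤ ENNReal.ofReal (dx * (F (((j : ℝ) + 1) * dx) - F ((j : ℝ) * dx))) := by
      intro x hx
      apply ENNReal.ofReal_le_ofReal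
      have := ptwise_aux u ux F hux_int hux2_int hFTC hE dx hdx x
      rw [hfloor j x hx] at this
      exact this
    calc (∫⁻ x in cell j, ENNReal.ofReal (e x ^ 2))
        ≤ ∫⁻ _x in cell j,
            ENNReal.ofReal (dx * (F (((j : ℝ) + 1) * dx) - F ((j : ℝ) * dx))) :=
          setLIntegral_mono measurable_const hbd
      _ = ENNReal.ofReal (dx * (F (((j : ℝ) + 1) * dx) - F ((j : ℝ) * dx))) *
            volume (cell j) := setLIntegral_const _ _
      _ = ENNReal.ofReal (dx ^ 2) *
            ENNReal.ofReal (F (((j : ℝ) + 1) * dx) - F ((j : ℝ) * dx)) := by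
          rw [hcell_def]
          simp only [Real.volume_Ico]
          rw [show ((j : ℝ) + 1) * dx - (j : ℝ) * dx = dx by ring,
            ← ENNReal.ofReal_mul (mul_nonneg hdx.le hF0j),
            ← ENNReal.ofReal_mul (by positivity : (0:ℝ) ≤ dx ^ 2)]
          congr 1
          ring
  -- total integral bound
  have hlint : (∫⁻ x, ENNReal.ofReal (e x ^ 2)) ≤ ENNReal.ofReal (Finf * dx ^ 2) := by
    have h1 : (∫⁻ x, ENNReal.ofReal (e x ^ 2))
        = ∑' j : ℤ, ∫⁻ x in cell j, ENNReal.ofReal (e x ^ 2) := by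
      rw [← lintegral_iUnion (fun j => measurableSet_Ico) hdisj, hUnion,
        Measure.restrict_univ]
    rw [h1]
    calc (∑' j : ℤ, ∫⁻ x in cell j, ENNReal.ofReal (e x ^ 2))
        ≤ ∑' j : ℤ, ENNReal.ofReal (dx ^ 2) *
            ENNReal.ofReal (F (((j : ℝ) + 1) * dx) - F ((j : ℝ) * dx)) :=
          ENNReal.tsum_le_tsum hcell_bound
      _ = ENNReal.ofReal (dx ^ 2) *
            ∑' j : ℤ, ENNReal.ofReal (F (((j : ℝ) + 1) * dx) - F ((j : ℝ) * dx)) :=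
          ENNReal.tsum_mul_left
      _ ≤ ENNReal.ofReal (dx ^ 2) * ENNReal.ofReal Finf :=
          mul_le_mul_right (tsum_bound_aux F Finf hFmono hF0 hFle dx hdx) _
      _ = ENNReal.ofReal (Finf * dx ^ 2) := by
          rw [← ENNReal.ofReal_mul (by positivity)]
          ring_nf
  -- translate to eLpNorm
  have hnorm_eq : ∀ x : ℝ, ((‖e x‖₊ : ENNReal)) ^ (2 : ℝ) = ENNReal.ofReal (e x ^ 2) := by
    intro x
    rw [← enorm_eq_nnnorm, ← ofReal_norm_eq_enorm,
      ENNReal.ofReal_rpow_of_nonneg (norm_nonneg _) (by norm_num : (0:ℝ) ≤ 2)]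
    congr 1
    rw [Real.norm_eq_abs, show (2 : ℝ) = ((2 : ℕ) : ℝ) by norm_num,
      Real.rpow_natCast, sq_abs]
  have hsnorm : eLpNorm e 2 volume
      = (∫⁻ x, ENNReal.ofReal (e x ^ 2)) ^ (1 / (2 : ℝ)) := by
    have h2 : ((2 : ENNReal)).toReal = 2 := by norm_num
    rw [eLpNorm_eq_lintegral_rpow_enorm_toReal (by norm_num) (by norm_num), h2]
    congr 1
    refine lintegral_congr fun x => ?_
    rw [← hnorm_eq x, enorm_eq_nnnorm]
  have hbound : eLpNorm e 2 volume ≤ ENNReal.ofReal (Real.sqrt Finf * dx) := by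
    rw [hsnorm]
    calc (∫⁻ x, ENNReal.ofReal (e x ^ 2)) ^ (1 / (2 : ℝ))
        ≤ (ENNReal.ofReal (Finf * dx ^ 2)) ^ (1 / (2 : ℝ)) :=
          ENNReal.rpow_le_rpow hlint (by norm_num)
      _ = ENNReal.ofReal ((Finf * dx ^ 2) ^ (1 / (2 : ℝ))) :=
          ENNReal.ofReal_rpow_of_nonneg (by positivity) (by norm_num)
      _ = ENNReal.ofReal (Real.sqrt Finf * dx) := by
          rw [← Real.sqrt_eq_rpow, Real.sqrt_mul hFinf.le, Real.sqrt_sq hdx.le]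
  exact ⟨⟨hmeas.aestronglyMeasurable,
    lt_of_le_of_lt hbound ENNReal.ofReal_lt_top⟩, hbound⟩
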